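/- Let n, p ≥ 1, let Φ be a real n×p matrix, W a symmetric positive semidefinite real n×n matrix, M̂ a real p×p matrix, θ₀ ∈ ℝ^p with support S = {j : θ₀,ⱼ ≠ 0}, ε ∈ ℝ^n, y = Φθ₀ + ε, λ > 0, μ ≥ 0, c₃ > 0, and Γ̂ = ΦᵀWΦ/n. Suppose (i) θ̂ ∈ ℝ^p satisfies the basic inequality (1/(2n))·(y − Φθ̂)ᵀW(y − Φθ̂) + λ‖θ̂‖₁ ≤ (1/(2n))·(y − Φθ₀)ᵀW(y − Φθ₀) + λ‖θ₀‖₁, (ii) ‖ΦᵀWε/n‖∞ ≤ λ/2, (iii) aᵀΓ̂a ≥ (c₃/2)·‖a_S‖₂² for all a ∈ ℝ^p with ‖a_{S^c}‖₁ ≤ 3‖a_S‖₁, and (iv) every entry of M̂Γ̂ − I has absolute value at most μ. Then the bias term Δ = √n·(M̂Γ̂ − I)(θ̂ − θ₀) satisfies ‖Δ‖∞ ≤ 24·√n·λ·μ·|S|/c₃. -/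

import Mathlib

open Matrix Finset

set_option maxHeartbeats 1000000 in
/-- Deterministic core of Theorem 1(b): on the event `‖ΦᵀWε/n‖∞ ≤ λ/2`, under the
restricted eigenvalue condition and the entry-wise bound `|M̂Γ̂ − I|∞ ≤ μ`, the
debiasing error `Δ = √n (M̂Γ̂ − I)(θ̂ − θ₀)` satisfies `‖Δ‖∞ ≤ 24 √n λ μ |S| / c₃`. -/
theorem debiasing_error_bound
    (n p : ℕ) (hn : 1 ≤ n) (hp : 1 ≤ p)
    (Φ : Matrix (Fin n) (Fin p) ℝ) (W : Matrix (Fin n) (Fin n) ℝ)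
    (hW : W.PosSemidef)
    (Mhat : Matrix (Fin p) (Fin p) ℝ)
    (θ0 θhat : Fin p → ℝ)
    (S : Finset (Fin p)) (hS : ∀ j, j ∈ S ↔ θ0 j ≠ 0)
    (ε : Fin n → ℝ) (y : Fin n → ℝ) (hy : y = Φ.mulVec θ0 + ε)
    (lam : ℝ) (hlam : 0 < lam) (μ : ℝ) (hμ : 0 ≤ μ) (c3 : ℝ) (hc3 : 0 < c3)
    (Γhat : Matrix (Fin p) (Fin p) ℝ)
    (hΓhat : Γhat = (n : ℝ)⁻¹ • (Φᵀ * W * Φ))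
    (hbasic :
      (1 / (2 * (n : ℝ))) * ((y - Φ.mulVec θhat) ⬝ᵥ W.mulVec (y - Φ.mulVec θhat))
          + lam * ∑ j, |θhat j|
        ≤ (1 / (2 * (n : ℝ))) * ((y - Φ.mulVec θ0) ⬝ᵥ W.mulVec (y - Φ.mulVec θ0))
          + lam * ∑ j, |θ0 j|)
    (hnoise : ∀ j, |(Φᵀ.mulVec (W.mulVec ε)) j / (n : ℝ)| ≤ lam / 2)
    (hRE : ∀ a : Fin p → ℝ, (∑ j ∈ Sᶜ, |a j|) ≤ 3 * ∑ j ∈ S, |a j| →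
      c3 / 2 * (∑ j ∈ S, (a j) ^ 2) ≤ a ⬝ᵥ Γhat.mulVec a)
    (hentry : ∀ i j, |(Mhat * Γhat - 1) i j| ≤ μ) :
    ∀ i, |(Real.sqrt n • (Mhat * Γhat - 1).mulVec (θhat - θ0)) i| ≤
      24 * Real.sqrt n * lam * μ * S.card / c3 := by
  have hn0 : (0:ℝ) < n := by exact_mod_cast hn
  set h : Fin p → ℝ := θhat - θ0 with hh
  set a := ∑ j ∈ S, |h j| with ha
  set b := ∑ j ∈ Sᶜ, |h j| with hb
  have ha0 : 0 ≤ a := Finset.sum_nonneg fun _ _ => abs_nonneg _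
  have hb0 : 0 ≤ b := Finset.sum_nonneg fun _ _ => abs_nonneg _
  -- symmetry of W
  have hWT : Wᵀ = W := (by simpa using hW.1 : W.IsSymm)
  have hsym : ∀ x z : Fin n → ℝ, x ⬝ᵥ W.mulVec z = z ⬝ᵥ W.mulVec x := by
    intro x z
    rw [Matrix.dotProduct_mulVec, ← Matrix.mulVec_transpose, hWT, dotProduct_comm]
  set u := Φ.mulVec h with hu
  have hQ0 : 0 ≤ u ⬝ᵥ W.mulVec u := by simpa using hW.dotProduct_mulVec_nonneg u
  set Q := u ⬝ᵥ W.mulVec u with hQ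
  set C := u ⬝ᵥ W.mulVec ε with hC
  -- residual identities
  have hres : y - Φ.mulVec θhat = ε - u := by
    funext i
    simp [hy, hu, hh, Matrix.mulVec_sub]
    ring
  have hres0 : y - Φ.mulVec θ0 = ε := by simp [hy]
  -- expand the quadratic form
  have hexp : (ε - u) ⬝ᵥ W.mulVec (ε - u)
      = ε ⬝ᵥ W.mulVec ε - 2 * C + Q := by
    have h1 : ε ⬝ᵥ W.mulVec u = C := by rw [hsym]
    simp only [Matrix.mulVec_sub, dotProduct_sub, sub_dotProduct, hC, hQ, h1]
    ring
  -- the basic inequality rewritten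
  have hbasic' : (1 / (2 * (n:ℝ))) * (Q - 2 * C) + lam * ∑ j, |θhat j|
      ≤ lam * ∑ j, |θ0 j| := by
    rw [hres, hres0, hexp] at hbasic
    have : (1 / (2 * (n:ℝ))) * (ε ⬝ᵥ W.mulVec ε - 2 * C + Q)
        = (1 / (2 * (n:ℝ))) * (ε ⬝ᵥ W.mulVec ε) + (1 / (2 * (n:ℝ))) * (Q - 2 * C) := by
      ring
    rw [this] at hbasic
    linarith
  -- bound the cross term
  have hdot : ∀ v : Fin n → ℝ, h ⬝ᵥ Φᵀ.mulVec v = u ⬝ᵥ v := by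
    intro v
    rw [Matrix.dotProduct_mulVec, Matrix.vecMul_transpose]
  have hCbound : |C| ≤ (n:ℝ) * lam / 2 * (a + b) := by
    have hC1 : C = ∑ j, h j * (Φᵀ.mulVec (W.mulVec ε)) j := by
      rw [hC, ← hdot]
      rfl
    have hab : a + b = ∑ j, |h j| := by
      rw [ha, hb, add_comm]
      exact Finset.sum_compl_add_sum S _
    rw [hC1, hab, Finset.mul_sum]
    refine (Finset.abs_sum_le_sum_abs _ _).trans (Finset.sum_le_sum fun j _ => ?_)
    rw [abs_mul]
    have hv : |(Φᵀ.mulVec (W.mulVec ε)) j| ≤ (n:ℝ) * lam / 2 := by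
      have := hnoise j
      rw [abs_div, abs_of_pos hn0] at this
      calc |(Φᵀ.mulVec (W.mulVec ε)) j| = (n:ℝ) * (|(Φᵀ.mulVec (W.mulVec ε)) j| / (n:ℝ)) := by
            field_simp
        _ ≤ (n:ℝ) * (lam / 2) := by
            exact mul_le_mul_of_nonneg_left this hn0.le
        _ = (n:ℝ) * lam / 2 := by ring
    calc |h j| * |(Φᵀ.mulVec (W.mulVec ε)) j| ≤ |h j| * ((n:ℝ) * lam / 2) :=
          mul_le_mul_of_nonneg_left hv (abs_nonneg _)
      _ = (n:ℝ) * lam / 2 * |h j| := by ring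
  -- ℓ1 comparison of θ0 and θhat
  have hl1 : (∑ j, |θ0 j|) - (∑ j, |θhat j|) ≤ a - b := by
    have e1 : ∀ f : Fin p → ℝ, (∑ j, f j) = ∑ j ∈ S, f j + ∑ j ∈ Sᶜ, f j := by
      intro f; rw [Finset.sum_add_sum_compl]
    rw [e1 (fun j => |θ0 j|), e1 (fun j => |θhat j|)]
    have hSc : ∀ j ∈ Sᶜ, |θ0 j| = 0 := by
      intro j hj
      rw [Finset.mem_compl, hS, not_not] at hj
      simp [hj]
    have hScsum : ∑ j ∈ Sᶜ, |θ0 j| = 0 := Finset.sum_eq_zero hSc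
    have hScsum2 : ∑ j ∈ Sᶜ, |θhat j| = b := by
      rw [hb]
      refine Finset.sum_congr rfl fun j hj => ?_
      rw [Finset.mem_compl, hS, not_not] at hj
      simp [hh, hj]
    have hSsum : (∑ j ∈ S, |θ0 j|) - (∑ j ∈ S, |θhat j|) ≤ a := by
      rw [ha, ← Finset.sum_sub_distrib]
      refine Finset.sum_le_sum fun j _ => ?_
      calc |θ0 j| - |θhat j| ≤ |θ0 j - θhat j| := abs_sub_abs_le_abs_sub _ _
        _ = |h j| := by rw [abs_sub_comm]; simp [hh]
    linarith [hScsum, hScsum2, hSsum]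
  -- key inequality : Q/(2n) ≤ (3λ/2) a − (λ/2) b
  have hkey : (1 / (2 * (n:ℝ))) * Q ≤ 3 * lam / 2 * a - lam / 2 * b := by
    have h1 : (1 / (2 * (n:ℝ))) * (Q - 2 * C) ≤ lam * (a - b) := by
      have := hbasic'
      nlinarith [this, hl1, hlam.le]
    have h2 : (1 / (n:ℝ)) * C ≤ lam / 2 * (a + b) := by
      have hCle : C ≤ (n:ℝ) * lam / 2 * (a + b) := (le_abs_self C).trans hCbound
      have : (1 / (n:ℝ)) * C ≤ (1 / (n:ℝ)) * ((n:ℝ) * lam / 2 * (a + b)) :=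
        mul_le_mul_of_nonneg_left hCle (by positivity)
      calc (1 / (n:ℝ)) * C ≤ (1 / (n:ℝ)) * ((n:ℝ) * lam / 2 * (a + b)) := this
        _ = lam / 2 * (a + b) := by field_simp
    have hexpand : (1 / (2 * (n:ℝ))) * (Q - 2 * C)
        = (1 / (2 * (n:ℝ))) * Q - (1 / (n:ℝ)) * C := by
      field_simp
    rw [hexpand] at h1
    linarith
  -- cone condition
  have hcone : b ≤ 3 * a := by
    have hQpos : 0 ≤ (1 / (2 * (n:ℝ))) * Q := by positivity
    nlinarith [hkey, hlam]
  -- relate Q and Γhat quadratic form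
  have hΓQ : h ⬝ᵥ Γhat.mulVec h = Q / n := by
    rw [hΓhat, Matrix.smul_mulVec, dotProduct_smul]
    have : (Φᵀ * W * Φ).mulVec h = Φᵀ.mulVec (W.mulVec u) := by
      rw [hu, ← Matrix.mulVec_mulVec, ← Matrix.mulVec_mulVec]
    rw [this, hdot, smul_eq_mul, ← hQ, div_eq_inv_mul]
  -- RE condition applied to h
  have hREh : c3 / 2 * (∑ j ∈ S, (h j) ^ 2) ≤ Q / n := by
    rw [← hΓQ]; exact hRE h hcone
  -- Q/n ≤ 3 λ a
  have hQn : Q / (n:ℝ) ≤ 3 * lam * a := by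
    have heq : (1 / (2 * (n:ℝ))) * Q = Q / (n:ℝ) / 2 := by
      rw [div_div, one_div_mul_eq_div, mul_comm]
    rw [heq] at hkey
    nlinarith [hkey, mul_nonneg hlam.le hb0]
  -- Cauchy–Schwarz : a² ≤ |S| Σ_S h²
  have hCS : a ^ 2 ≤ (S.card : ℝ) * ∑ j ∈ S, (h j) ^ 2 := by
    have := sq_sum_le_card_mul_sum_sq (s := S) (f := fun j => |h j|)
    simpa [ha, sq_abs] using this
  -- bound on a
  have habound : a ≤ 6 * lam * S.card / c3 := by
    rcases eq_or_lt_of_le ha0 with h0 | h0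
    · have hle : a ≤ 0 := le_of_eq h0.symm
      have hpos : (0:ℝ) ≤ 6 * lam * S.card / c3 := by positivity
      linarith
    · have hcard : 0 < (S.card : ℝ) := by
        have hne : S.Nonempty := by
          rw [Finset.nonempty_iff_ne_empty]
          intro hemp
          have h0' := h0
          rw [ha, hemp, Finset.sum_empty] at h0'
          exact lt_irrefl _ h0'
        exact_mod_cast Finset.card_pos.mpr hne
      have hsum : c3 / 2 * (∑ j ∈ S, (h j) ^ 2) ≤ 3 * lam * a := le_trans hREh hQn
      have : c3 / 2 * a ^ 2 ≤ (S.card : ℝ) * (3 * lam * a) := by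
        calc c3 / 2 * a ^ 2 ≤ c3 / 2 * ((S.card : ℝ) * ∑ j ∈ S, (h j) ^ 2) :=
              mul_le_mul_of_nonneg_left hCS (by positivity)
          _ = (S.card : ℝ) * (c3 / 2 * ∑ j ∈ S, (h j) ^ 2) := by ring
          _ ≤ (S.card : ℝ) * (3 * lam * a) :=
              mul_le_mul_of_nonneg_left hsum hcard.le
      have hca : c3 * a ≤ 6 * lam * (S.card : ℝ) := by nlinarith
      rw [div_eq_inv_mul]
      calc a = c3⁻¹ * (c3 * a) := by field_simp
        _ ≤ c3⁻¹ * (6 * lam * (S.card : ℝ)) := by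
            exact mul_le_mul_of_nonneg_left hca (by positivity)
        _ = c3⁻¹ * (6 * lam * S.card) := by norm_num
  -- ℓ1 bound on h
  have hl1h : ∑ j, |h j| ≤ 24 * lam * S.card / c3 := by
    have : (∑ j, |h j|) = a + b := by
      rw [ha, hb, add_comm]; exact (Finset.sum_compl_add_sum S _).symm
    rw [this]
    calc a + b ≤ a + 3 * a := by linarith [hcone]
      _ = 4 * a := by ring
      _ ≤ 4 * (6 * lam * S.card / c3) := by linarith [habound]
      _ = 24 * lam * S.card / c3 := by ring
  -- final bound
  intro i
  have hsqrt : 0 ≤ Real.sqrt n := Real.sqrt_nonneg _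
  have hmain : |((Mhat * Γhat - 1).mulVec h) i| ≤ μ * (24 * lam * S.card / c3) := by
    have h1 : |((Mhat * Γhat - 1).mulVec h) i| ≤ ∑ j, μ * |h j| := by
      have hrepr : ((Mhat * Γhat - 1).mulVec h) i = ∑ j, (Mhat * Γhat - 1) i j * h j := rfl
      rw [hrepr]
      refine (Finset.abs_sum_le_sum_abs _ _).trans (Finset.sum_le_sum fun j _ => ?_)
      rw [abs_mul]
      exact mul_le_mul_of_nonneg_right (hentry i j) (abs_nonneg _)
    calc |((Mhat * Γhat - 1).mulVec h) i| ≤ ∑ j, μ * |h j| := h1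
      _ = μ * ∑ j, |h j| := by rw [Finset.mul_sum]
      _ ≤ μ * (24 * lam * S.card / c3) := mul_le_mul_of_nonneg_left hl1h hμ
  have : |(Real.sqrt n • (Mhat * Γhat - 1).mulVec h) i|
      = Real.sqrt n * |((Mhat * Γhat - 1).mulVec h) i| := by
    simp [abs_mul, abs_of_nonneg hsqrt]
  rw [this]
  calc Real.sqrt n * |((Mhat * Γhat - 1).mulVec h) i|
      ≤ Real.sqrt n * (μ * (24 * lam * S.card / c3)) :=
        mul_le_mul_of_nonneg_left hmain hsqrt
    _ = 24 * Real.sqrt n * lam * μ * S.card / c3 := by ring
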